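/- Let C be a cycle and P a path, vertex-disjoint, in a multigraph, and let v₁ ∈ C and v₂ an internal vertex of P be distinguished. Then there is an exchange of two edges (deleting one edge of C incident to v₁ and one edge of P incident to v₂, and adding two new edges between the components) that produces a single path of length |C| + |P| on the union of the vertex sets, preserving all vertex degrees. -/

import Mathlib

/-- The edge multiset of a (multigraph) cycle of length `m` through the vertices
`f 0, f 1, …, f (m-1)` in order. -/
def cycleEdgeMultiset {V : Type} (m : ℕ) (f : Fin m → V) : Multiset (Sym2 V) :=
  ↑((List.finRange m).map fun i => s(f i, f ⟨((i : ℕ) + 1) % m, Nat.mod_lt _ i.pos⟩))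

/-- The edge multiset of a path of length `p` (in edges) through the vertices
`f 0, f 1, …, f p` in order. -/
def pathEdgeMultiset {V : Type} (p : ℕ) (f : Fin (p + 1) → V) : Multiset (Sym2 V) :=
  ↑((List.finRange p).map fun i => s(f i.castSucc, f i.succ))

/-- Degree of a vertex in a multigraph given by a multiset of edges
(a loop counts twice). -/
def multisetDeg {V : Type} [DecidableEq V] (E : Multiset (Sym2 V)) (v : V) : ℕ :=
  (E.map fun e => (if v ∈ e then 1 else 0) + (if e = s(v, v) then 1 else 0)).sum

section Helpers

lemma range_one' : List.range 1 = [0] := by simp [List.range_succ]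

lemma mod_cancel (a i₀ t₁ t₂ : ℕ) (h1 : 1 ≤ t₁) (h1' : t₁ ≤ a) (h2 : 1 ≤ t₂) (h2' : t₂ ≤ a)
    (he : (i₀ + t₁) % a = (i₀ + t₂) % a) : t₁ = t₂ := by
  have key : t₁ % a = t₂ % a := Nat.ModEq.add_left_cancel' i₀ he
  rcases Nat.lt_or_ge t₁ a with hA | hA <;> rcases Nat.lt_or_ge t₂ a with hB | hB
  · rwa [Nat.mod_eq_of_lt hA, Nat.mod_eq_of_lt hB] at key
  · have : t₂ = a := le_antisymm h2' hB
    subst this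
    rw [Nat.mod_eq_of_lt hA, Nat.mod_self] at key; omega
  · have : t₁ = a := le_antisymm h1' hA
    subst this
    rw [Nat.mod_eq_of_lt hB, Nat.mod_self] at key; omega
  · omega

lemma shift_hit' (a i₀ x : ℕ) (hi : i₀ < a) (hx : x < a) :
    (i₀ + (x + a - i₀) % a) % a = x := by
  have h1 : (i₀ + (x + a - i₀) % a) % a = (i₀ + (x + a - i₀)) % a :=
    Nat.ModEq.add_left i₀ (Nat.mod_modEq _ a)
  rw [h1, show i₀ + (x + a - i₀) = x + a by omega, Nat.add_mod_right, Nat.mod_eq_of_lt hx]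

lemma shift_hit (a i₀ x : ℕ) (hi : i₀ < a) (hx : x < a) :
    ∃ t, 1 ≤ t ∧ t ≤ a ∧ (i₀ + t) % a = x := by
  set d := (x + a - i₀) % a with hd
  rcases Nat.eq_zero_or_pos d with h | h
  · refine ⟨a, by omega, le_rfl, ?_⟩
    have := shift_hit' a i₀ x hi hx
    rw [← hd, h, Nat.add_zero, Nat.mod_eq_of_lt hi] at this
    rw [Nat.add_mod_right, Nat.mod_eq_of_lt hi, this]
  · exact ⟨d, h, le_of_lt (Nat.mod_lt _ (by omega)), shift_hit' a i₀ x hi hx⟩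

lemma rot_perm (a i₀ : ℕ) (h0 : 0 < a) (hi : i₀ < a) :
    ((List.range a).map (fun t => (i₀ + t) % a)).Perm (List.range a) := by
  apply List.perm_of_nodup_nodup_toFinset_eq
  · refine List.Nodup.map_on ?_ List.nodup_range
    intro t₁ h₁ t₂ h₂ he
    simp only [List.mem_range] at h₁ h₂
    have : (i₀ + (t₁ + 1)) % a = (i₀ + (t₂ + 1)) % a := by
      have e1 : (i₀ + (t₁ + 1)) % a = ((i₀ + t₁) % a + 1 % a) % a := by
        rw [← Nat.add_mod]; ring_nf
      have e2 : (i₀ + (t₂ + 1)) % a = ((i₀ + t₂) % a + 1 % a) % a := by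
        rw [← Nat.add_mod]; ring_nf
      rw [e1, e2, he]
    exact Nat.succ_injective
      (mod_cancel a i₀ (t₁+1) (t₂+1) (by omega) (by omega) (by omega) (by omega) this)
  · exact List.nodup_range
  · ext x
    simp only [List.mem_toFinset, List.mem_map, List.mem_range]
    constructor
    · rintro ⟨t, ht, rfl⟩; exact Nat.mod_lt _ h0
    · intro hx
      exact ⟨(x + a - i₀) % a, Nat.mod_lt _ h0, shift_hit' a i₀ x hi hx⟩

variable {V : Type}

/-- cycle edge function on naturals (wraps mod `a`). -/
def cE (a : ℕ) (h0 : 0 < a) (f : Fin a → V) (k : ℕ) : Sym2 V :=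
  s(f ⟨k % a, Nat.mod_lt _ h0⟩, f ⟨(k + 1) % a, Nat.mod_lt _ h0⟩)

/-- path edge function on naturals (wraps mod `p+1`). -/
def pE (p : ℕ) (g : Fin (p + 1) → V) (k : ℕ) : Sym2 V :=
  s(g ⟨k % (p + 1), Nat.mod_lt _ (Nat.succ_pos p)⟩,
    g ⟨(k + 1) % (p + 1), Nat.mod_lt _ (Nat.succ_pos p)⟩)

lemma cycle_eq_range (a : ℕ) (h0 : 0 < a) (f : Fin a → V) :
    cycleEdgeMultiset a f = ↑((List.range a).map (cE a h0 f)) := by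
  unfold cycleEdgeMultiset
  congr 1
  apply List.ext_getElem (by simp)
  intro i h1 h2
  simp only [List.getElem_map, List.getElem_finRange, List.getElem_range, cE]
  have hi : i < a := by simpa using h1
  congr 2 <;> simp [Fin.ext_iff, Nat.mod_eq_of_lt hi]

lemma path_eq_range (p : ℕ) (g : Fin (p + 1) → V) :
    pathEdgeMultiset p g = ↑((List.range p).map (pE p g)) := by
  unfold pathEdgeMultiset
  congr 1
  apply List.ext_getElem (by simp)
  intro i h1 h2
  simp only [List.getElem_map, List.getElem_finRange, List.getElem_range, pE]
  have hi : i < p := by simpa using h1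
  congr 2 <;> simp [Fin.ext_iff, Nat.mod_eq_of_lt, hi, Nat.lt_succ_of_lt, Nat.succ_lt_succ,
    Nat.mod_eq_of_lt (show i < p + 1 by omega)]

lemma cE_mod (a : ℕ) (h0 : 0 < a) (ha : 1 < a) (f : Fin a → V) (k : ℕ) :
    cE a h0 f (k % a) = cE a h0 f k := by
  have m1 : k % a % a = k % a := Nat.mod_mod_of_dvd k dvd_rfl
  have m2 : (k % a + 1) % a = (k + 1) % a := by
    conv_rhs => rw [Nat.add_mod]
    rw [Nat.mod_eq_of_lt ha]
  simp [cE, Fin.ext_iff, m1, m2]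

/-- rotated cycle list decomposition -/
lemma cycle_rot (a : ℕ) (h0 : 0 < a) (ha : 1 < a) (f : Fin a → V) (i₀ : ℕ) (hi : i₀ < a) :
    (↑((List.range a).map (cE a h0 f)) : Multiset (Sym2 V))
      = ↑((List.range a).map (fun t => cE a h0 f (i₀ + t))) := by
  rw [Multiset.coe_eq_coe]
  have step : (List.range a).map (fun t => cE a h0 f (i₀ + t))
      = ((List.range a).map (fun t => (i₀ + t) % a)).map (cE a h0 f) := by
    rw [List.map_map]
    exact List.map_congr_left (fun t _ => (cE_mod a h0 ha f (i₀ + t)).symm)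
  rw [step]
  exact (List.Perm.map _ (rot_perm a i₀ h0 hi)).symm

def mergeFun (a p : ℕ) (h0 : 0 < a) (f : Fin a → V) (g : Fin (p + 1) → V)
    (i₀ j₀ : ℕ) (hj : j₀ < p) : Fin (a + p + 1) → V := fun k =>
  if hk : (k : ℕ) ≤ j₀ then g ⟨k, by omega⟩
  else if hk2 : (k : ℕ) ≤ j₀ + a then f ⟨(i₀ + ((k : ℕ) - j₀)) % a, Nat.mod_lt _ h0⟩
  else g ⟨(k : ℕ) - a, by omega⟩

lemma mergeFun_low (a p : ℕ) (h0 : 0 < a) (f : Fin a → V) (g : Fin (p + 1) → V)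
    (i₀ j₀ : ℕ) (hj : j₀ < p) (k : Fin (a + p + 1)) (hk : (k : ℕ) ≤ j₀) :
    mergeFun a p h0 f g i₀ j₀ hj k = g ⟨k, by omega⟩ := by
  unfold mergeFun; rw [dif_pos hk]

lemma mergeFun_mid (a p : ℕ) (h0 : 0 < a) (f : Fin a → V) (g : Fin (p + 1) → V)
    (i₀ j₀ : ℕ) (hj : j₀ < p) (k : Fin (a + p + 1)) (hk : j₀ < (k : ℕ)) (hk2 : (k : ℕ) ≤ j₀ + a) :
    mergeFun a p h0 f g i₀ j₀ hj k = f ⟨(i₀ + ((k : ℕ) - j₀)) % a, Nat.mod_lt _ h0⟩ := by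
  unfold mergeFun; rw [dif_neg (by omega), dif_pos hk2]

lemma mergeFun_high (a p : ℕ) (h0 : 0 < a) (f : Fin a → V) (g : Fin (p + 1) → V)
    (i₀ j₀ : ℕ) (hj : j₀ < p) (k : Fin (a + p + 1)) (hk : j₀ + a < (k : ℕ)) :
    mergeFun a p h0 f g i₀ j₀ hj k = g ⟨(k : ℕ) - a, by omega⟩ := by
  unfold mergeFun; rw [dif_neg (by omega), dif_neg (by omega)]

lemma mergeFun_low' (a p : ℕ) (h0 : 0 < a) (f : Fin a → V) (g : Fin (p + 1) → V)
    (i₀ j₀ : ℕ) (hj : j₀ < p) (k : ℕ) (hk1 : k < a + p + 1) (hk : k ≤ j₀) :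
    mergeFun a p h0 f g i₀ j₀ hj ⟨k, hk1⟩ = g ⟨k, by omega⟩ :=
  mergeFun_low a p h0 f g i₀ j₀ hj ⟨k, hk1⟩ hk

lemma mergeFun_mid' (a p : ℕ) (h0 : 0 < a) (f : Fin a → V) (g : Fin (p + 1) → V)
    (i₀ j₀ : ℕ) (hj : j₀ < p) (k : ℕ) (hk1 : k < a + p + 1) (hk : j₀ < k) (hk2 : k ≤ j₀ + a) :
    mergeFun a p h0 f g i₀ j₀ hj ⟨k, hk1⟩ = f ⟨(i₀ + (k - j₀)) % a, Nat.mod_lt _ h0⟩ :=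
  mergeFun_mid a p h0 f g i₀ j₀ hj ⟨k, hk1⟩ hk hk2

lemma mergeFun_high' (a p : ℕ) (h0 : 0 < a) (f : Fin a → V) (g : Fin (p + 1) → V)
    (i₀ j₀ : ℕ) (hj : j₀ < p) (k : ℕ) (hk1 : k < a + p + 1) (hk : j₀ + a < k) :
    mergeFun a p h0 f g i₀ j₀ hj ⟨k, hk1⟩ = g ⟨k - a, by omega⟩ :=
  mergeFun_high a p h0 f g i₀ j₀ hj ⟨k, hk1⟩ hk

end Helpers

set_option maxHeartbeats 1000000 in
theorem stmt_10 {V : Type} [DecidableEq V] (a p : ℕ) (ha : 2 ≤ a)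
    (f : Fin a → V) (g : Fin (p + 1) → V)
    (hf : Function.Injective f) (hg : Function.Injective g)
    (hdisj : ∀ i j, f i ≠ g j)
    (i₀ : Fin a) (j₀ : Fin (p + 1)) (hj₀ : 0 < (j₀ : ℕ)) (hj₁ : (j₀ : ℕ) < p) :
    ∃ (e₁ e₂ e₃ e₄ : Sym2 V) (h : Fin (a + p + 1) → V),
      e₁ ∈ cycleEdgeMultiset a f ∧ f i₀ ∈ e₁ ∧
      e₂ ∈ pathEdgeMultiset p g ∧ g j₀ ∈ e₂ ∧
      Function.Injective h ∧
      Set.range h = Set.range f ∪ Set.range g ∧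
      pathEdgeMultiset (a + p) h
        = (cycleEdgeMultiset a f + pathEdgeMultiset p g - {e₁, e₂}) + {e₃, e₄} ∧
      ∀ v, multisetDeg (pathEdgeMultiset (a + p) h) v
        = multisetDeg (cycleEdgeMultiset a f + pathEdgeMultiset p g) v := by
  have h0 : 0 < a := by omega
  have ha1 : 1 < a := ha
  obtain ⟨c, hc⟩ : ∃ c, a = c + 1 := ⟨a - 1, by omega⟩
  set jn : ℕ := (j₀ : ℕ) with hjn
  obtain ⟨q, hq⟩ : ∃ q, p = jn + 1 + q := ⟨p - jn - 1, by omega⟩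
  set h : Fin (a + p + 1) → V := mergeFun a p h0 f g (i₀ : ℕ) jn hj₁ with hh
  set fi1 : Fin a := ⟨((i₀ : ℕ) + 1) % a, Nat.mod_lt _ h0⟩ with hfi1
  set gj1 : Fin (p + 1) := ⟨jn + 1, by omega⟩ with hgj1
  set e₁ : Sym2 V := s(f i₀, f fi1) with he₁
  set e₂ : Sym2 V := s(g j₀, g gj1) with he₂
  set e₃ : Sym2 V := s(g j₀, f fi1) with he₃
  set e₄ : Sym2 V := s(f i₀, g gj1) with he₄
  set A : Multiset (Sym2 V) := ↑((List.range jn).map (pE p g)) with hA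
  set B : Multiset (Sym2 V) :=
    ↑((List.range c).map (fun t => cE a h0 f ((i₀ : ℕ) + 1 + t))) with hB
  set D : Multiset (Sym2 V) :=
    ↑((List.range q).map (fun t => pE p g (jn + 1 + t))) with hD
  have sym2_congr : ∀ {x y x' y' : V}, x = x' → y = y' → s(x, y) = s(x', y') := by
    intro x y x' y' h1 h2; rw [h1, h2]
  -- cycle decomposition
  have hC : cycleEdgeMultiset a f = e₁ ::ₘ B := by
    rw [cycle_eq_range a h0 f, cycle_rot a h0 ha1 f (i₀ : ℕ) i₀.isLt]
    rw [show List.range a = 0 :: (List.range c).map Nat.succ from by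
      rw [hc, List.range_succ_eq_map]]
    rw [List.map_cons, List.map_map]
    have hfun : ((fun t => cE a h0 f ((i₀ : ℕ) + t)) ∘ Nat.succ)
        = fun t => cE a h0 f ((i₀ : ℕ) + 1 + t) := by
      funext t
      simp only [Function.comp_apply]
      congr 1
      omega
    rw [hfun]
    have hhead : cE a h0 f ((i₀ : ℕ) + 0) = e₁ := by
      rw [he₁]
      unfold cE
      exact sym2_congr (congrArg f (Fin.ext (by simp [Nat.mod_eq_of_lt i₀.isLt])))
        (congrArg f (Fin.ext (by simp [hfi1])))
    rw [hhead, ← Multiset.cons_coe]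
  -- path decomposition
  have hP : pathEdgeMultiset p g = A + (e₂ ::ₘ D) := by
    rw [path_eq_range p g]
    rw [show List.range p = List.range (jn + (1 + q)) from congrArg List.range (by omega)]
    rw [List.range_add, List.range_add, range_one']
    simp only [List.map_append, List.map_map, List.map_cons, List.map_nil, Function.comp_def,
      List.singleton_append, List.cons_append, List.nil_append]
    have h1 : pE p g (jn + 0) = e₂ := by
      rw [he₂]
      unfold pE
      refine sym2_congr (congrArg g (Fin.ext ?_)) (congrArg g (Fin.ext ?_))
      · simp [Nat.mod_eq_of_lt (show jn < p + 1 by omega)]; rfl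
      · simp [hgj1, Nat.mod_eq_of_lt (show jn + 1 < p + 1 by omega)]
    have h2 : (List.range q).map (fun t => pE p g (jn + (1 + t)))
        = (List.range q).map (fun t => pE p g (jn + 1 + t)) := by
      refine List.map_congr_left fun t _ => ?_
      congr 1
      omega
    rw [h1, h2, hA, hD, ← Multiset.coe_add, ← Multiset.cons_coe]
  -- pointwise descriptions of the new path's edges
  have hHE1 : ∀ k ∈ List.range jn, pE (a + p) h k = pE p g k := by
    intro k hk
    simp only [List.mem_range] at hk
    unfold pE
    rw [hh]
    simp only [Nat.mod_eq_of_lt (show k < a + p + 1 by omega),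
      Nat.mod_eq_of_lt (show k + 1 < a + p + 1 by omega),
      Nat.mod_eq_of_lt (show k < p + 1 by omega),
      Nat.mod_eq_of_lt (show k + 1 < p + 1 by omega)]
    rw [mergeFun_low' a p h0 f g (i₀ : ℕ) jn hj₁ (k) (by omega) (by omega),
      mergeFun_low' a p h0 f g (i₀ : ℕ) jn hj₁ (k + 1) (by omega) (by omega)]
  have hHE2 : pE (a + p) h (jn + 0) = e₃ := by
    rw [he₃]
    unfold pE
    rw [hh]
    simp only [Nat.mod_eq_of_lt (show jn + 0 < a + p + 1 by omega),
      Nat.mod_eq_of_lt (show jn + 0 + 1 < a + p + 1 by omega)]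
    rw [mergeFun_low' a p h0 f g (i₀ : ℕ) jn hj₁ (jn + 0) (by omega) (by omega),
      mergeFun_mid' a p h0 f g (i₀ : ℕ) jn hj₁ (jn + 0 + 1) (by omega) (by omega) (by omega)]
    refine sym2_congr (congrArg g (Fin.ext (by simp; rfl))) (congrArg f (Fin.ext ?_))
    simp only [hfi1]
    congr 1
    omega
  have hHE3 : ∀ t ∈ List.range c, pE (a + p) h (jn + (1 + t))
      = cE a h0 f ((i₀ : ℕ) + 1 + t) := by
    intro t ht
    simp only [List.mem_range] at ht
    unfold pE cE
    rw [hh]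
    simp only [Nat.mod_eq_of_lt (show jn + (1 + t) < a + p + 1 by omega),
      Nat.mod_eq_of_lt (show jn + (1 + t) + 1 < a + p + 1 by omega)]
    rw [mergeFun_mid' a p h0 f g (i₀ : ℕ) jn hj₁ (jn + (1 + t)) (by omega) (by omega) (by omega),
      mergeFun_mid' a p h0 f g (i₀ : ℕ) jn hj₁ (jn + (1 + t) + 1) (by omega) (by omega) (by omega)]
    refine sym2_congr (congrArg f (Fin.ext ?_)) (congrArg f (Fin.ext ?_)) <;>
      · simp only []
        congr 1
        omega
  have hHE4 : pE (a + p) h (jn + (1 + (c + 0))) = e₄ := by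
    rw [he₄]
    unfold pE
    rw [hh]
    simp only [Nat.mod_eq_of_lt (show jn + (1 + (c + 0)) < a + p + 1 by omega),
      Nat.mod_eq_of_lt (show jn + (1 + (c + 0)) + 1 < a + p + 1 by omega)]
    rw [mergeFun_mid' a p h0 f g (i₀ : ℕ) jn hj₁ (jn + (1 + (c + 0))) (by omega)
        (by omega) (by omega),
      mergeFun_high' a p h0 f g (i₀ : ℕ) jn hj₁ (jn + (1 + (c + 0)) + 1) (by omega) (by omega)]
    refine sym2_congr (congrArg f (Fin.ext ?_)) (congrArg g (Fin.ext ?_))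
    · show ((i₀ : ℕ) + (jn + (1 + (c + 0)) - jn)) % a = (i₀ : ℕ)
      rw [show (i₀ : ℕ) + (jn + (1 + (c + 0)) - jn) = (i₀ : ℕ) + a by omega,
        Nat.add_mod_right, Nat.mod_eq_of_lt i₀.isLt]
    · simp only [hgj1]
      omega
  have hHE5 : ∀ t ∈ List.range q, pE (a + p) h (jn + (1 + (c + (1 + t))))
      = pE p g (jn + 1 + t) := by
    intro t ht
    simp only [List.mem_range] at ht
    unfold pE
    rw [hh]
    simp only [Nat.mod_eq_of_lt (show jn + (1 + (c + (1 + t))) < a + p + 1 by omega),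
      Nat.mod_eq_of_lt (show jn + (1 + (c + (1 + t))) + 1 < a + p + 1 by omega),
      Nat.mod_eq_of_lt (show jn + 1 + t < p + 1 by omega),
      Nat.mod_eq_of_lt (show jn + 1 + t + 1 < p + 1 by omega)]
    rw [mergeFun_high' a p h0 f g (i₀ : ℕ) jn hj₁ (jn + (1 + (c + (1 + t)))) (by omega) (by omega),
      mergeFun_high' a p h0 f g (i₀ : ℕ) jn hj₁ (jn + (1 + (c + (1 + t))) + 1) (by omega)
        (by omega)]
    refine sym2_congr (congrArg g (Fin.ext ?_)) (congrArg g (Fin.ext ?_)) <;>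
      · simp only []
        omega
  -- new path decomposition
  have hH : pathEdgeMultiset (a + p) h = A + (e₃ ::ₘ (B + (e₄ ::ₘ D))) := by
    rw [path_eq_range (a + p) h]
    have hlist : (List.range (a + p)).map (pE (a + p) h)
        = (List.range jn).map (pE p g)
          ++ e₃ :: (((List.range c).map fun t => cE a h0 f ((i₀ : ℕ) + 1 + t))
          ++ e₄ :: ((List.range q).map fun t => pE p g (jn + 1 + t))) := by
      rw [show List.range (a + p) = List.range (jn + (1 + (c + (1 + q))))
        from congrArg List.range (by omega)]
      rw [List.range_add, List.range_add, range_one', List.range_add, List.range_add,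
        range_one']
      simp only [List.map_append, List.map_map, List.map_cons, List.map_nil, Function.comp_def,
        List.singleton_append, List.cons_append, List.nil_append, List.append_assoc]
      rw [List.map_congr_left hHE1, hHE2, List.map_congr_left hHE3, hHE4,
        List.map_congr_left hHE5]
    rw [hlist]
    simp only [← Multiset.cons_coe, ← Multiset.coe_add]
    rfl
  have hinj : Function.Injective h := by
    intro k₁ k₂ he
    rw [hh] at he
    apply Fin.ext
    by_cases a1 : (k₁ : ℕ) ≤ jn
    · by_cases b1 : (k₂ : ℕ) ≤ jn
      · rw [mergeFun_low a p h0 f g _ jn hj₁ k₁ a1,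
          mergeFun_low a p h0 f g _ jn hj₁ k₂ b1] at he
        have := congrArg Fin.val (hg he); simpa using this
      · by_cases b2 : (k₂ : ℕ) ≤ jn + a
        · rw [mergeFun_low a p h0 f g _ jn hj₁ k₁ a1,
            mergeFun_mid a p h0 f g _ jn hj₁ k₂ (by omega) b2] at he
          exact absurd he.symm (hdisj _ _)
        · rw [mergeFun_low a p h0 f g _ jn hj₁ k₁ a1,
            mergeFun_high a p h0 f g _ jn hj₁ k₂ (by omega)] at he
          have := congrArg Fin.val (hg he)
          simp only at this
          omega
    · by_cases a2 : (k₁ : ℕ) ≤ jn + a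
      · by_cases b1 : (k₂ : ℕ) ≤ jn
        · rw [mergeFun_mid a p h0 f g _ jn hj₁ k₁ (by omega) a2,
            mergeFun_low a p h0 f g _ jn hj₁ k₂ b1] at he
          exact absurd he (hdisj _ _)
        · by_cases b2 : (k₂ : ℕ) ≤ jn + a
          · rw [mergeFun_mid a p h0 f g _ jn hj₁ k₁ (by omega) a2,
              mergeFun_mid a p h0 f g _ jn hj₁ k₂ (by omega) b2] at he
            have hv := congrArg Fin.val (hf he)
            simp only at hv
            have := mod_cancel a (i₀ : ℕ) ((k₁ : ℕ) - jn) ((k₂ : ℕ) - jn)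
              (by omega) (by omega) (by omega) (by omega) hv
            omega
          · rw [mergeFun_mid a p h0 f g _ jn hj₁ k₁ (by omega) a2,
              mergeFun_high a p h0 f g _ jn hj₁ k₂ (by omega)] at he
            exact absurd he (hdisj _ _)
      · by_cases b1 : (k₂ : ℕ) ≤ jn
        · rw [mergeFun_high a p h0 f g _ jn hj₁ k₁ (by omega),
            mergeFun_low a p h0 f g _ jn hj₁ k₂ b1] at he
          have := congrArg Fin.val (hg he)
          simp only at this
          omega
        · by_cases b2 : (k₂ : ℕ) ≤ jn + a
          · rw [mergeFun_high a p h0 f g _ jn hj₁ k₁ (by omega),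
              mergeFun_mid a p h0 f g _ jn hj₁ k₂ (by omega) b2] at he
            exact absurd he.symm (hdisj _ _)
          · rw [mergeFun_high a p h0 f g _ jn hj₁ k₁ (by omega),
              mergeFun_high a p h0 f g _ jn hj₁ k₂ (by omega)] at he
            have := congrArg Fin.val (hg he)
            simp only at this
            omega
  have hrange : Set.range h = Set.range f ∪ Set.range g := by
    ext v
    constructor
    · rintro ⟨k, rfl⟩
      rw [hh]
      by_cases a1 : (k : ℕ) ≤ jn
      · rw [mergeFun_low a p h0 f g _ jn hj₁ k a1]
        exact Or.inr ⟨_, rfl⟩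
      · by_cases a2 : (k : ℕ) ≤ jn + a
        · rw [mergeFun_mid a p h0 f g _ jn hj₁ k (by omega) a2]
          exact Or.inl ⟨_, rfl⟩
        · rw [mergeFun_high a p h0 f g _ jn hj₁ k (by omega)]
          exact Or.inr ⟨_, rfl⟩
    · rintro (⟨i, rfl⟩ | ⟨j, rfl⟩)
      · obtain ⟨t, ht1, ht2, ht3⟩ := shift_hit a (i₀ : ℕ) (i : ℕ) i₀.isLt i.isLt
        refine ⟨⟨jn + t, by omega⟩, ?_⟩
        rw [hh, mergeFun_mid' a p h0 f g (i₀ : ℕ) jn hj₁ (jn + t) (by omega) (by omega) (by omega)]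
        refine congrArg f (Fin.ext ?_)
        show ((i₀ : ℕ) + (jn + t - jn)) % a = (i : ℕ)
        rw [show jn + t - jn = t by omega, ht3]
      · by_cases hj : (j : ℕ) ≤ jn
        · refine ⟨⟨(j : ℕ), by omega⟩, ?_⟩
          rw [hh, mergeFun_low' a p h0 f g (i₀ : ℕ) jn hj₁ (j : ℕ) (by omega) (by omega)]
        · refine ⟨⟨(j : ℕ) + a, by omega⟩, ?_⟩
          rw [hh, mergeFun_high' a p h0 f g (i₀ : ℕ) jn hj₁ ((j : ℕ) + a) (by omega) (by omega)]
          exact congrArg g (Fin.ext (by simp))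
  refine ⟨e₁, e₂, e₃, e₄, h, ?_, ?_, ?_, ?_, hinj, hrange, ?_, ?_⟩
  · rw [hC]; exact Multiset.mem_cons_self _ _
  · rw [he₁]; exact Sym2.mem_mk_left _ _
  · rw [hP]
    exact Multiset.mem_add.2 (Or.inr (Multiset.mem_cons_self _ _))
  · rw [he₂]; exact Sym2.mem_mk_left _ _
  · -- multiset identity
    rw [hC, hP, hH]
    have hsub : (e₁ ::ₘ B + (A + e₂ ::ₘ D)) - {e₁, e₂} = B + (A + D) := by
      rw [show ({e₁, e₂} : Multiset (Sym2 V)) = e₁ ::ₘ e₂ ::ₘ 0 from rfl]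
      rw [Multiset.sub_cons, Multiset.sub_cons, Multiset.sub_zero]
      rw [Multiset.cons_add, Multiset.erase_cons_head]
      have : B + (A + e₂ ::ₘ D) = e₂ ::ₘ (B + (A + D)) := by
        rw [Multiset.add_cons, Multiset.add_cons]
      rw [this, Multiset.erase_cons_head]
    rw [hsub]
    simp only [Multiset.insert_eq_cons, ← Multiset.singleton_add]
    abel
  · -- degrees
    intro v
    rw [hH, hC, hP]
    have degadd : ∀ X Y : Multiset (Sym2 V),
        multisetDeg (X + Y) v = multisetDeg X v + multisetDeg Y v := fun X Y => by
      simp [multisetDeg]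
    have degcons : ∀ (e : Sym2 V) (X : Multiset (Sym2 V)),
        multisetDeg (e ::ₘ X) v
          = ((if v ∈ e then 1 else 0) + (if e = s(v, v) then 1 else 0)) + multisetDeg X v :=
      fun e X => by simp [multisetDeg]
    rw [degadd, degcons, degadd, degcons, degadd, degcons, degadd, degcons]
    have d_ne : ∀ x y : V, x ≠ y →
        ((if v ∈ s(x, y) then 1 else 0) + (if s(x, y) = s(v, v) then 1 else 0))
          = (if v = x then 1 else 0) + (if v = y then 1 else 0) := by
      intro x y hxy
      have hl : s(x, y) ≠ s(v, v) := by
        intro hcon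
        rw [Sym2.eq_iff] at hcon
        rcases hcon with ⟨h1, h2⟩ | ⟨h1, h2⟩ <;> exact hxy (h1.trans h2.symm)
      rw [if_neg hl, add_zero]
      by_cases h1 : v = x <;> by_cases h2 : v = y
      · exact absurd (h1.symm.trans h2) hxy
      · simp [Sym2.mem_iff, h1, h2, hxy]
      · simp [Sym2.mem_iff, h1, h2, Ne.symm hxy]
      · simp [Sym2.mem_iff, h1, h2]
    have hne1 : f i₀ ≠ f fi1 := by
      intro hcon
      have hv := congrArg Fin.val (hf hcon)
      rw [hfi1] at hv
      simp only at hv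
      rcases Nat.lt_or_ge ((i₀ : ℕ) + 1) a with hlt | hge
      · rw [Nat.mod_eq_of_lt hlt] at hv; omega
      · have : (i₀ : ℕ) + 1 = a := by omega
        rw [this, Nat.mod_self] at hv
        omega
    have hne2 : g j₀ ≠ g gj1 := by
      intro hcon
      have hv := congrArg Fin.val (hg hcon)
      rw [hgj1] at hv
      simp only at hv
      omega
    have hne3 : g j₀ ≠ f fi1 := (hdisj fi1 j₀).symm
    have hne4 : f i₀ ≠ g gj1 := hdisj i₀ gj1
    rw [he₁, he₂, he₃, he₄, d_ne _ _ hne3, d_ne _ _ hne4, d_ne _ _ hne1, d_ne _ _ hne2]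
    omega
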